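/- Let X be a Banach space without the point of continuity property and let 0 < ε < 1. Then there exists a norm-closed subset A of X such that (1) every nonempty relatively weakly open subset of A has diameter greater than 1 − ε, and (2) sup{‖a‖ : a ∈ A} = 1. -/

import Mathlib

open Filter Topology

/-- `V` is open in the weak topology of the normed space `X`: around each of its
points it contains a basic weak neighbourhood determined by finitely many
continuous functionals. -/
def IsWeaklyOpen {X : Type*} [NormedAddCommGroup X] [NormedSpace ℝ X] (V : Set X) : Prop :=
  ∀ x ∈ V, ∃ (s : Finset (X →L[ℝ] ℝ)) (δ : ℝ), 0 < δ ∧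
    { y : X | ∀ f ∈ s, |f y - f x| < δ } ⊆ V

/-- `X` has the point of continuity property (PCP): every nonempty bounded subset
of `X` admits nonempty relatively weakly open subsets of arbitrarily small
diameter. -/
def HasPCP (X : Type*) [NormedAddCommGroup X] [NormedSpace ℝ X] : Prop :=
  ∀ A : Set X, A.Nonempty → Bornology.IsBounded A → ∀ ε : ℝ, 0 < ε →
    ∃ V : Set X, IsWeaklyOpen V ∧ (V ∩ A).Nonempty ∧ Metric.diam (V ∩ A) < ε

lemma isWeaklyOpen_univ {X : Type*} [NormedAddCommGroup X] [NormedSpace ℝ X] :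
    IsWeaklyOpen (Set.univ : Set X) := by
  intro x _
  exact ⟨∅, 1, one_pos, by intro y _; trivial⟩

lemma IsWeaklyOpen.inter {X : Type*} [NormedAddCommGroup X] [NormedSpace ℝ X]
    {V W : Set X} (hV : IsWeaklyOpen V) (hW : IsWeaklyOpen W) :
    IsWeaklyOpen (V ∩ W) := by
  classical
  intro x hx
  obtain ⟨s₁, δ₁, hδ₁, hs₁⟩ := hV x hx.1
  obtain ⟨s₂, δ₂, hδ₂, hs₂⟩ := hW x hx.2
  refine ⟨s₁ ∪ s₂, min δ₁ δ₂, lt_min hδ₁ hδ₂, ?_⟩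
  intro y hy
  constructor
  · exact hs₁ (fun f hf => lt_of_lt_of_le (hy f (Finset.mem_union_left _ hf)) (min_le_left _ _))
  · exact hs₂ (fun f hf => lt_of_lt_of_le (hy f (Finset.mem_union_right _ hf)) (min_le_right _ _))

/-- A weakly open set containing a point of the closure of `S` meets `S`. -/
lemma IsWeaklyOpen.inter_closure_nonempty {X : Type*} [NormedAddCommGroup X]
    [NormedSpace ℝ X] {W : Set X} (hW : IsWeaklyOpen W) {S : Set X} {x : X}
    (hx : x ∈ W) (hxc : x ∈ closure S) : (W ∩ S).Nonempty := by
  obtain ⟨s, δ, hδ, hs⟩ := hW x hx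
  set N : Set X := { y : X | ∀ f ∈ s, |f y - f x| < δ } with hN
  have hNopen : IsOpen N := by
    have hNeq : N = ⋂ f ∈ s, { y : X | |f y - f x| < δ } := by
      ext y; simp [hN]
    rw [hNeq]
    refine isOpen_biInter_finset (fun f _ => ?_)
    have h2 : { y : X | |f y - f x| < δ } = (fun y => |f y - f x|) ⁻¹' Set.Iio δ := rfl
    rw [h2]
    exact (((f.continuous.sub continuous_const).abs)).isOpen_preimage _ isOpen_Iio
  have hxN : x ∈ N := by
    intro f _
    simpa using hδ
  obtain ⟨y, hyN, hyS⟩ := _root_.mem_closure_iff.mp hxc N hNopen hxN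
  exact ⟨y, hs hyN, hyS⟩

/-- **Lemma.** If a Banach space `X` fails the point of continuity
property and `0 < ε < 1`, then there is a norm-closed subset `A` of `X` such that
(1) every nonempty relatively weakly open subset of `A` has diameter greater than
`1 − ε`, and (2) `sup { ‖a‖ : a ∈ A } = 1`. -/
theorem exists_closed_set_of_not_hasPCP
    (X : Type*) [NormedAddCommGroup X] [NormedSpace ℝ X] [CompleteSpace X]
    (hX : ¬ HasPCP X) (ε : ℝ) (hε0 : 0 < ε) (hε1 : ε < 1) :
    ∃ A : Set X, IsClosed A ∧
      (∀ V : Set X, IsWeaklyOpen V → (V ∩ A).Nonempty →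
        1 - ε < Metric.diam (V ∩ A)) ∧
      sSup ((fun a : X => ‖a‖) '' A) = 1 := by
  classical
  rw [HasPCP] at hX
  push_neg at hX
  obtain ⟨A₀, hA₀ne, hA₀bdd, ε₀, hε₀, hbad⟩ := hX
  -- the set of diameters of nonempty relatively weakly open pieces of A₀
  set D : Set ℝ := { d | ∃ V : Set X, IsWeaklyOpen V ∧ (V ∩ A₀).Nonempty ∧
      d = Metric.diam (V ∩ A₀) } with hD
  have hDne : D.Nonempty := by
    refine ⟨Metric.diam (Set.univ ∩ A₀), Set.univ, isWeaklyOpen_univ, ?_, rfl⟩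
    simpa using hA₀ne
  have hDbdd : BddBelow D := by
    refine ⟨ε₀, fun d hd => ?_⟩
    obtain ⟨V, hV, hVne, rfl⟩ := hd
    exact hbad V hV hVne
  set m : ℝ := sInf D with hm
  have hmε₀ : ε₀ ≤ m := le_csInf hDne (fun d hd => by
    obtain ⟨V, hV, hVne, rfl⟩ := hd; exact hbad V hV hVne)
  have hmpos : 0 < m := lt_of_lt_of_le hε₀ hmε₀
  set η : ℝ := m * ε / (2 * (1 - ε)) with hη
  have hηpos : 0 < η := by
    apply div_pos (mul_pos hmpos hε0)
    nlinarith
  -- pick a weakly open slice of diameter < m + η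
  have hlt : m < m + η := by linarith
  obtain ⟨d, hdD, hdlt⟩ := exists_lt_of_csInf_lt hDne hlt
  obtain ⟨V₀, hV₀, hV₀ne, rfl⟩ := hdD
  set C : Set X := closure (V₀ ∩ A₀) with hC
  have hCclosed : IsClosed C := isClosed_closure
  obtain ⟨p₀, hp₀⟩ := hV₀ne
  have hCne : C.Nonempty := ⟨p₀, subset_closure hp₀⟩
  have hCbdd : Bornology.IsBounded C :=
    ((hA₀bdd.subset Set.inter_subset_right).closure)
  have hCdiam : Metric.diam C = Metric.diam (V₀ ∩ A₀) := Metric.diam_closure _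
  have hCdiam_lt : Metric.diam C < m + η := by rw [hCdiam]; exact hdlt
  -- every nonempty relatively weakly open piece of C has diameter ≥ m
  have hCkey : ∀ W : Set X, IsWeaklyOpen W → (W ∩ C).Nonempty →
      m ≤ Metric.diam (W ∩ C) := by
    intro W hW hWne
    obtain ⟨x, hxW, hxC⟩ := hWne
    obtain ⟨y, hyW, hyVA⟩ := hW.inter_closure_nonempty hxW hxC
    have h1 : ((W ∩ V₀) ∩ A₀).Nonempty := ⟨y, ⟨hyW, hyVA.1⟩, hyVA.2⟩
    have h2 : m ≤ Metric.diam ((W ∩ V₀) ∩ A₀) :=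
      csInf_le hDbdd ⟨W ∩ V₀, hW.inter hV₀, h1, rfl⟩
    refine le_trans h2 (Metric.diam_mono ?_ (hCbdd.subset Set.inter_subset_right))
    intro z hz
    exact ⟨hz.1.1, subset_closure ⟨hz.1.2, hz.2⟩⟩
  -- translate by a point of C and rescale
  obtain ⟨x₀, hx₀⟩ := hCne
  have hdist_le : ∀ y ∈ C, ‖y - x₀‖ ≤ Metric.diam C := by
    intro y hy
    rw [← dist_eq_norm]
    exact Metric.dist_le_diam_of_mem hCbdd hy hx₀
  set S : Set ℝ := (fun y => ‖y - x₀‖) '' C with hS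
  have hSne : S.Nonempty := ⟨‖x₀ - x₀‖, x₀, hx₀, rfl⟩
  have hSbdd : BddAbove S := by
    refine ⟨Metric.diam C, fun r hr => ?_⟩
    obtain ⟨y, hy, rfl⟩ := hr
    exact hdist_le y hy
  set M : ℝ := sSup S with hM
  have hMle : M ≤ Metric.diam C := csSup_le hSne (fun r hr => by
    obtain ⟨y, hy, rfl⟩ := hr; exact hdist_le y hy)
  have hCdiam_ge : m ≤ Metric.diam C := by
    have h := hCkey Set.univ isWeaklyOpen_univ ⟨x₀, Set.mem_univ _, hx₀⟩
    simpa using h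
  have hMpos : 0 < M := by
    by_contra h
    push_neg at h
    have hC0 : Metric.diam C ≤ 0 := by
      apply Metric.diam_le_of_forall_dist_le le_rfl
      intro x hx y hy
      have hx' : ‖x - x₀‖ ≤ 0 := le_trans (le_csSup hSbdd ⟨x, hx, rfl⟩) h
      have hy' : ‖y - x₀‖ ≤ 0 := le_trans (le_csSup hSbdd ⟨y, hy, rfl⟩) h
      have hxx : x = x₀ := by
        have h1 := le_antisymm hx' (norm_nonneg _)
        rwa [norm_eq_zero, sub_eq_zero] at h1
      have hyy : y = x₀ := by
        have h1 := le_antisymm hy' (norm_nonneg _)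
        rwa [norm_eq_zero, sub_eq_zero] at h1
      simp [hxx, hyy]
    linarith
  have hMne : M ≠ 0 := ne_of_gt hMpos
  have hMinv : 0 < M⁻¹ := inv_pos.mpr hMpos
  set g : X → X := fun y => M⁻¹ • (y - x₀) with hg
  set A : Set X := g '' C with hA
  have hgnorm : ∀ y : X, ‖g y‖ = M⁻¹ * ‖y - x₀‖ := by
    intro y
    rw [hg]
    simp only [norm_smul, Real.norm_eq_abs, abs_of_pos hMinv]
  refine ⟨A, ?_, ?_, ?_⟩
  · -- A is closed since it is a preimage of C under a continuous map
    have hAeq : A = (fun x : X => x₀ + M • x) ⁻¹' C := by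
      ext x
      constructor
      · rintro ⟨y, hy, rfl⟩
        have h1 : x₀ + M • (M⁻¹ • (y - x₀)) = y := by
          rw [smul_smul, mul_inv_cancel₀ hMne, one_smul]
          abel
        simpa [hg, h1] using hy
      · intro hx
        refine ⟨x₀ + M • x, hx, ?_⟩
        rw [hg]
        simp only [add_sub_cancel_left, smul_smul, inv_mul_cancel₀ hMne, one_smul]
    rw [hAeq]
    exact hCclosed.preimage (continuous_const.add (continuous_id.const_smul M))
  · -- nonempty relatively weakly open pieces of A have diameter > 1 - ε
    intro V hV hVAne
    set W : Set X := g ⁻¹' V with hW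
    have hWopen : IsWeaklyOpen W := by
      intro y hy
      obtain ⟨s, δ, hδ, hs⟩ := hV (g y) hy
      refine ⟨s, M * δ, mul_pos hMpos hδ, ?_⟩
      intro z hz
      have hmem : g z ∈ { u : X | ∀ f ∈ s, |f u - f (g y)| < δ } := by
        intro f hf
        have hcalc : f (g z) - f (g y) = M⁻¹ * (f z - f y) := by
          rw [hg]
          simp only [map_smul, map_sub, smul_eq_mul]
          ring
        rw [hcalc, abs_mul, abs_of_pos hMinv]
        have h1 := hz f hf
        calc M⁻¹ * |f z - f y| < M⁻¹ * (M * δ) :=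
              mul_lt_mul_of_pos_left h1 hMinv
          _ = δ := by field_simp
      exact hs hmem
    have hWCne : (W ∩ C).Nonempty := by
      obtain ⟨a, haV, y, hyC, rfl⟩ := hVAne
      exact ⟨y, haV, hyC⟩
    have hm_le : m ≤ Metric.diam (W ∩ C) := hCkey W hWopen hWCne
    -- A is bounded
    have hAbdd : Bornology.IsBounded A := by
      have hsub : A ⊆ Metric.closedBall 0 1 := by
        rintro a ⟨y, hy, rfl⟩
        rw [Metric.mem_closedBall, dist_zero_right, hgnorm]
        have h1 : ‖y - x₀‖ ≤ M := le_csSup hSbdd ⟨y, hy, rfl⟩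
        calc M⁻¹ * ‖y - x₀‖ ≤ M⁻¹ * M :=
              mul_le_mul_of_nonneg_left h1 hMinv.le
          _ = 1 := inv_mul_cancel₀ hMne
      exact (Metric.isBounded_closedBall).subset hsub
    have hdiam_ub : Metric.diam (W ∩ C) ≤ M * Metric.diam (V ∩ A) := by
      apply Metric.diam_le_of_forall_dist_le (mul_nonneg hMpos.le Metric.diam_nonneg)
      intro y hy z hz
      have hgy : g y ∈ V ∩ A := ⟨hy.1, ⟨y, hy.2, rfl⟩⟩
      have hgz : g z ∈ V ∩ A := ⟨hz.1, ⟨z, hz.2, rfl⟩⟩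
      have hd : dist (g y) (g z) = M⁻¹ * dist y z := by
        rw [dist_eq_norm, dist_eq_norm]
        have h1 : g y - g z = M⁻¹ • (y - z) := by
          rw [hg]
          rw [← smul_sub]
          congr 1
          abel
        rw [h1, norm_smul, Real.norm_eq_abs, abs_of_pos hMinv]
      have hle : dist (g y) (g z) ≤ Metric.diam (V ∩ A) :=
        Metric.dist_le_diam_of_mem (hAbdd.subset Set.inter_subset_right) hgy hgz
      rw [hd] at hle
      calc dist y z = M * (M⁻¹ * dist y z) := by field_simp
        _ ≤ M * Metric.diam (V ∩ A) := mul_le_mul_of_nonneg_left hle hMpos.le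
    -- conclude
    have hMη : M < m + η := lt_of_le_of_lt hMle hCdiam_lt
    have hkey : (1 - ε) * M < m := by
      have hε1' : (0:ℝ) < 1 - ε := by linarith
      have hηε : (1 - ε) * η = m * ε / 2 := by
        rw [hη]; field_simp
      nlinarith
    have hfin : (1 - ε) * M < M * Metric.diam (V ∩ A) :=
      lt_of_lt_of_le hkey (le_trans hm_le hdiam_ub)
    rw [mul_comm M _] at hfin
    exact lt_of_mul_lt_mul_right hfin hMpos.le
  · -- sup of norms over A is 1
    have himg : (fun a : X => ‖a‖) '' A = (fun r => M⁻¹ * r) '' S := by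
      rw [hA, hS, Set.image_image, Set.image_image]
      apply Set.image_congr
      intro y _
      exact hgnorm y
    rw [himg]
    apply IsLUB.csSup_eq
    · constructor
      · rintro r ⟨t, ht, rfl⟩
        have h1 : t ≤ M := le_csSup hSbdd ht
        calc M⁻¹ * t ≤ M⁻¹ * M := mul_le_mul_of_nonneg_left h1 hMinv.le
          _ = 1 := inv_mul_cancel₀ hMne
      · intro w hw
        by_contra h
        push_neg at h
        have hMw : M * w < M := by nlinarith
        obtain ⟨t, ht, hwt⟩ := exists_lt_of_lt_csSup hSne hMw
        have h2 : M⁻¹ * t ≤ w := hw ⟨t, ht, rfl⟩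
        have h3 : t ≤ M * w := by
          calc t = M * (M⁻¹ * t) := by field_simp
            _ ≤ M * w := mul_le_mul_of_nonneg_left h2 hMpos.le
        linarith
    · exact hSne.image _
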